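/- Let M be a nonnegative integer, let σ_{j,i} (for H_{j,i} ≠ 0) be permutations of {1,…,M} specifying an M-cover of the Tanner graph of H, and let p be a graph-cover pseudocodeword for this M-cover. Then there exists an LP pseudocodeword (h, z) whose matrix representation equals that of p, i.e., h_i(α) = m_i(α) = |{ℓ ∈ {1,…,M} : p_{i,ℓ} = α}| for all i ∈ {1,…,n} and α ∈ R. -/
import Mathlib


open Finset

/-- The tuple of sets `X_j(c)`: for each symbol `α`, the set of positions `i` in the
support of the `j`-th row of `H` where `c i = α`. -/
def Xj {R : Type} [Ring R] [DecidableEq R] {n m : ℕ} (H : Fin m → Fin n → R) (j : Fin m)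
    (c : Fin n → R) : R → Finset (Fin n) :=
  fun α => univ.filter (fun i => H j i ≠ 0 ∧ c i = α)

/-- The set `E_j` of all tuples `X_j(c)` arising from words `c` satisfying parity check `j`. -/
def Ej {R : Type} [Ring R] [Fintype R] [DecidableEq R] {n m : ℕ} (H : Fin m → Fin n → R)
    (j : Fin m) : Finset (R → Finset (Fin n)) :=
  (univ.filter (fun c : Fin n → R => ∑ i, H j i * c i = 0)).image (Xj H j)

/-- Membership in the relaxed LP polytope `Q`. -/
def MemQ {R : Type} [Ring R] [Fintype R] [DecidableEq R] {n m : ℕ} (H : Fin m → Fin n → R)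
    (f : Fin n → R → ℝ) (w : Fin m → (R → Finset (Fin n)) → ℝ) : Prop :=
  (∀ j : Fin m, ∀ S ∈ Ej H j, 0 ≤ w j S ∧ w j S ≤ 1) ∧
  (∀ j : Fin m, ∑ S ∈ Ej H j, w j S = 1) ∧
  (∀ j : Fin m, ∀ i : Fin n, H j i ≠ 0 → ∀ α : R, α ≠ 0 →
    f i α = ∑ S ∈ (Ej H j).filter (fun S => i ∈ S α), w j S)

/-- LP pseudocodeword: nonnegative integer vectors `(h, z)` satisfying the defining equations. -/
def IsLPPseudocodeword {R : Type} [Ring R] [Fintype R] [DecidableEq R] {n m : ℕ}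
    (H : Fin m → Fin n → R) (h : Fin n → R → ℤ)
    (z : Fin m → (R → Finset (Fin n)) → ℤ) : Prop :=
  (∀ i α, 0 ≤ h i α) ∧
  (∀ j : Fin m, ∀ S ∈ Ej H j, 0 ≤ z j S) ∧
  (∀ j : Fin m, ∀ i : Fin n, H j i ≠ 0 →
    (∀ α : R, α ≠ 0 → h i α = ∑ S ∈ (Ej H j).filter (fun S => i ∈ S α), z j S) ∧
    h i 0 = ∑ S ∈ (Ej H j).filter (fun S => ∀ α : R, α ≠ 0 → i ∉ S α), z j S)

/-- The embedding of a word `c ∈ Rⁿ` as the point `(ξ(c₁) | … | ξ(c_n))`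
(indicator coordinates for the nonzero symbols). -/
def xiEmb {R : Type} [Zero R] [DecidableEq R] {n : ℕ} (c : Fin n → R) : Fin n → R → ℝ :=
  fun i α => if α ≠ 0 ∧ c i = α then 1 else 0

/-- The linear cost function `λ · fᵀ = ∑_i ∑_{α ∈ R⁻} λ_i^{(α)} f_i^{(α)}`. -/
def costQ {R : Type} [Zero R] [Fintype R] [DecidableEq R] {n : ℕ}
    (lam f : Fin n → R → ℝ) : ℝ :=
  ∑ i, ∑ α ∈ univ.filter (fun α : R => α ≠ 0), lam i α * f i α

/-- Connectedness of the Tanner graph of `H`: the bipartite graph on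
`{u_1,…,u_n} ∪ {v_1,…,v_m}` with `u_i ~ v_j` iff `H j i ≠ 0`. -/
def TannerConnected {R : Type} [Zero R] {n m : ℕ} (H : Fin m → Fin n → R) : Prop :=
  (SimpleGraph.fromRel (fun x y : Fin n ⊕ Fin m =>
      ∃ i j, x = Sum.inl i ∧ y = Sum.inr j ∧ H j i ≠ 0)).Connected

/-- Graph-cover pseudocodeword for the `M`-cover specified by permutations `σ`. -/
def IsGCPseudocodeword {R : Type} [Ring R] [DecidableEq R] {n m : ℕ}
    (H : Fin m → Fin n → R) (M : ℕ) (σ : Fin m → Fin n → Equiv.Perm (Fin M))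
    (p : Fin n → Fin M → R) : Prop :=
  ∀ (j : Fin m) (ℓ : Fin M),
    ∑ i ∈ univ.filter (fun i => H j i ≠ 0), H j i * p i (σ j i ℓ) = 0
/-- from a graph-cover pseudocodeword `p` of an `M`-cover one obtains an
LP pseudocodeword `(h, z)` with the same matrix representation. -/
theorem stmt7 {R : Type} [Ring R] [Fintype R] [DecidableEq R] {n m : ℕ}
    (H : Fin m → Fin n → R) (M : ℕ)
    (σ : Fin m → Fin n → Equiv.Perm (Fin M)) (p : Fin n → Fin M → R)
    (hp : IsGCPseudocodeword H M σ p) :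
    ∃ (h : Fin n → R → ℤ) (z : Fin m → (R → Finset (Fin n)) → ℤ),
      IsLPPseudocodeword H h z ∧
      ∀ (i : Fin n) (α : R),
        h i α = ((univ.filter (fun ℓ : Fin M => p i ℓ = α)).card : ℤ) := by
  classical
  set c : Fin m → Fin M → Fin n → R := fun j ℓ i => p i (σ j i ℓ) with hc
  have hcmem : ∀ j ℓ, ∑ i, H j i * c j ℓ i = 0 := by
    intro j ℓ
    have h1 : ∑ i ∈ univ.filter (fun i => H j i ≠ 0), H j i * c j ℓ i
        = ∑ i, H j i * c j ℓ i := by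
      apply Finset.sum_filter_of_ne
      intro i _ hne h0
      exact hne (by rw [h0, zero_mul])
    rw [← h1]; exact hp j ℓ
  have hXmem : ∀ j ℓ, Xj H j (c j ℓ) ∈ Ej H j := fun j ℓ =>
    Finset.mem_image.2 ⟨c j ℓ, Finset.mem_filter.2 ⟨Finset.mem_univ _, hcmem j ℓ⟩, rfl⟩
  refine ⟨fun i α => ((univ.filter (fun ℓ : Fin M => p i ℓ = α)).card : ℤ),
    fun j S => ((univ.filter (fun ℓ : Fin M => Xj H j (c j ℓ) = S)).card : ℤ),
    ⟨fun i α => Int.natCast_nonneg _, fun j S _ => Int.natCast_nonneg _, ?_⟩,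
    fun i α => rfl⟩
  intro j i hi
  have hcard : ∀ α : R, (univ.filter (fun ℓ : Fin M => p i ℓ = α)).card
      = (univ.filter (fun ℓ : Fin M => c j ℓ i = α)).card := by
    intro α
    apply Finset.card_bij' (fun ℓ _ => (σ j i)⁻¹ ℓ) (fun ℓ _ => σ j i ℓ)
    · intro ℓ hℓ
      simp only [Finset.mem_filter, Finset.mem_univ, true_and] at hℓ ⊢
      simpa [hc] using hℓ
    · intro ℓ hℓ
      simp only [Finset.mem_filter, Finset.mem_univ, true_and, hc] at hℓ ⊢
      exact hℓ
    · intro ℓ _; simp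
    · intro ℓ _; simp
  have key : ∀ (P : (R → Finset (Fin n)) → Prop) [DecidablePred P] (α : R),
      (∀ ℓ : Fin M, P (Xj H j (c j ℓ)) ↔ c j ℓ i = α) →
      ((univ.filter (fun ℓ : Fin M => p i ℓ = α)).card : ℤ) =
      ∑ S ∈ (Ej H j).filter P,
        ((univ.filter (fun ℓ : Fin M => Xj H j (c j ℓ) = S)).card : ℤ) := by
    intro P _ α hPiff
    rw [hcard α]
    rw [Finset.card_eq_sum_card_fiberwise
      (f := fun ℓ => Xj H j (c j ℓ)) (t := (Ej H j).filter P)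
      (fun ℓ hℓ => Finset.mem_filter.2 ⟨hXmem j ℓ,
        (hPiff ℓ).2 (Finset.mem_filter.1 hℓ).2⟩)]
    push_cast
    apply Finset.sum_congr rfl
    intro S hS
    have heq : (univ.filter (fun ℓ : Fin M => c j ℓ i = α)).filter
        (fun ℓ => Xj H j (c j ℓ) = S) = univ.filter (fun ℓ => Xj H j (c j ℓ) = S) := by
      ext ℓ
      simp only [Finset.mem_filter, Finset.mem_univ, true_and]
      constructor
      · rintro ⟨-, h2⟩; exact h2
      · intro h2
        refine ⟨(hPiff ℓ).1 ?_, h2⟩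
        rw [h2]; exact (Finset.mem_filter.1 hS).2
    exact_mod_cast congrArg Finset.card heq
  constructor
  · intro α hα
    apply key
    intro ℓ
    simp only [Xj, Finset.mem_filter, Finset.mem_univ, true_and]
    exact ⟨fun h => h.2, fun h => ⟨hi, h⟩⟩
  · apply key
    intro ℓ
    constructor
    · intro hall
      by_contra h0
      exact hall (c j ℓ i) h0
        (Finset.mem_filter.2 ⟨Finset.mem_univ _, hi, rfl⟩)
    · intro h0 α hα hmem
      simp only [Xj, Finset.mem_filter, Finset.mem_univ, true_and] at hmem
      exact hα (hmem.2 ▸ h0)
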